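/- Let d ≥ 1 and D ≥ 1 be integers. There exist constants γ > 0 and C < ∞ depending only on d (with C also allowed to depend on D) with the following property. Let P : ℝ² → ℝ^D be a vector-valued polynomial of degree ≤ d, let f, g : [0,1] → ℝ^D be measurable, and let E ⊆ [0,1]² be a measurable set such that |f(x) + g(y) + P(x,y)| ≤ 1 for all (x,y) ∈ E. Define A := inf over ℝ^D-valued polynomials p, q of degree ≤ d of sup_{(x,y)∈[0,1]²} |P(x,y) − p(x) − q(y)|. Then |E| ≤ C A^{-γ}. -/

import Mathlib

open MeasureTheory Set Polynomial ENNReal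

/-- The Euclidean norm on `ℝ^D` presented as `Fin D → ℝ`. -/
noncomputable def euclNorm {D : ℕ} (v : Fin D → ℝ) : ℝ :=
  Real.sqrt (∑ i, v i ^ 2)

/-- Greedy selection of δ-separated points in a set of large measure. -/
lemma exists_separated (n : ℕ) (δ : ℝ) (hδ : 0 < δ) :
    ∀ S : Set ℝ, ENNReal.ofReal (2 * n * δ) < volume S →
      ∃ v : Fin (n + 1) → ℝ, (∀ i, v i ∈ S) ∧ ∀ i j, i ≠ j → δ ≤ |v i - v j| := by
  induction n with
  | zero =>
    intro S hS
    have hne : S.Nonempty := by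
      rcases S.eq_empty_or_nonempty with h | h
      · simp [h] at hS
      · exact h
    obtain ⟨x, hx⟩ := hne
    exact ⟨fun _ => x, fun _ => hx, fun i j hij => absurd (Fin.ext (by omega)) hij⟩
  | succ n ih =>
    intro S hS
    have hne : S.Nonempty := by
      rcases S.eq_empty_or_nonempty with h | h
      · simp [h] at hS
      · exact h
    obtain ⟨x, hx⟩ := hne
    set S' := S \ Metric.closedBall x δ with hS'
    have hsub : S ⊆ S' ∪ Metric.closedBall x δ := by
      intro z hz
      by_cases h : z ∈ Metric.closedBall x δ
      · exact Or.inr h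
      · exact Or.inl ⟨hz, h⟩
    have hball : volume (Metric.closedBall x δ) = ENNReal.ofReal (2 * δ) := by
      rw [Real.volume_closedBall]
    have hS'vol : ENNReal.ofReal (2 * n * δ) < volume S' := by
      by_contra h
      push_neg at h
      have : volume S ≤ ENNReal.ofReal (2 * n * δ) + ENNReal.ofReal (2 * δ) :=
        le_trans (measure_mono hsub) (le_trans (measure_union_le _ _)
          (add_le_add h hball.le))
      rw [← ENNReal.ofReal_add (by positivity) (by positivity)] at this
      have h2 : (2 : ℝ) * (n + 1) * δ = 2 * n * δ + 2 * δ := by ring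
      rw [Nat.cast_succ] at hS
      rw [h2] at hS
      exact absurd (lt_of_lt_of_le hS this) (lt_irrefl _)
    obtain ⟨v', hv'S, hv'sep⟩ := ih S' hS'vol
    refine ⟨Fin.cons x v', ?_, ?_⟩
    · intro i
      refine Fin.cases ?_ ?_ i
      · simpa using hx
      · intro j; simpa using (hv'S j).1
    · intro i j hij
      have key : ∀ k, δ ≤ |x - v' k| := by
        intro k
        have : v' k ∉ Metric.closedBall x δ := (hv'S k).2
        rw [Metric.mem_closedBall, not_le, Real.dist_eq] at this
        rw [abs_sub_comm]
        exact this.le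
      rcases Fin.eq_zero_or_eq_succ i with rfl | ⟨i', rfl⟩ <;>
        rcases Fin.eq_zero_or_eq_succ j with rfl | ⟨j', rfl⟩
      · exact absurd rfl hij
      · simpa using key j'
      · simp only [Fin.cons_zero, Fin.cons_succ]
        rw [abs_sub_comm]; exact key i'
      · have hne : i' ≠ j' := fun h => hij (by rw [h])
        simpa using hv'sep i' j' hne

lemma lagrange_bound {d : ℕ} (p : Polynomial ℝ) (hp : p.natDegree ≤ d)
    (v : Fin (d + 1) → ℝ) (δ : ℝ) (hδ : 0 < δ)
    (hsep : ∀ i j, i ≠ j → δ ≤ |v i - v j|)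
    (hvI : ∀ i, v i ∈ Set.Icc (0:ℝ) 1) (M : ℝ) (hM : ∀ i, |p.eval (v i)| ≤ M)
    (t : ℝ) (ht : t ∈ Set.Icc (0:ℝ) 1) :
    |p.eval t| ≤ (d + 1) * M * (1 / δ) ^ d := by
  have hM0 : 0 ≤ M := le_trans (abs_nonneg _) (hM 0)
  have hinj : Set.InjOn v ↑(Finset.univ : Finset (Fin (d+1))) := by
    intro i _ j _ h
    by_contra hne
    have := hsep i j hne
    rw [h] at this
    simp at this
    linarith
  have hdeg : p.degree < (Finset.univ : Finset (Fin (d+1))).card := by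
    rw [Finset.card_univ, Fintype.card_fin]
    calc p.degree ≤ p.natDegree := Polynomial.degree_le_natDegree
    _ < (d+1 : ℕ) := by exact_mod_cast Nat.lt_succ_of_le hp
  have hrep := Lagrange.eq_interpolate hinj hdeg
  -- eval at t
  have heval : p.eval t = ∑ i, p.eval (v i) * (Lagrange.basis Finset.univ v i).eval t := by
    conv_lhs => rw [hrep]
    rw [Lagrange.interpolate_apply, Polynomial.eval_finset_sum]
    simp [Polynomial.eval_mul]
  rw [heval]
  have hbasis : ∀ i, |(Lagrange.basis Finset.univ v i).eval t| ≤ (1 / δ) ^ d := by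
    intro i
    rw [Lagrange.basis, Polynomial.eval_prod]
    rw [Finset.abs_prod]
    have hcard : (Finset.univ.erase i).card = d := by
      rw [Finset.card_erase_of_mem (Finset.mem_univ i), Finset.card_univ, Fintype.card_fin]
      rfl
    calc ∏ j ∈ Finset.univ.erase i, |(Lagrange.basisDivisor (v i) (v j)).eval t|
        ≤ ∏ j ∈ Finset.univ.erase i, (1 / δ) := by
          apply Finset.prod_le_prod (fun _ _ => abs_nonneg _)
          intro j hj
          have hij : i ≠ j := (Finset.mem_erase.mp hj).1.symm
          rw [Lagrange.basisDivisor, Polynomial.eval_mul, Polynomial.eval_C,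
            Polynomial.eval_sub, Polynomial.eval_X, Polynomial.eval_C, abs_mul, abs_inv]
          have h1 : |t - v j| ≤ 1 := by
            have h1 := hvI j; have h2 := ht
            rw [abs_le]; constructor <;> [nlinarith [h1.1, h1.2, h2.1, h2.2];
              nlinarith [h1.1, h1.2, h2.1, h2.2]]
          have h2 : δ ≤ |v i - v j| := hsep i j hij
          have h3 : |v i - v j|⁻¹ ≤ δ⁻¹ := by
            apply inv_anti₀ hδ h2
          calc |v i - v j|⁻¹ * |t - v j| ≤ δ⁻¹ * 1 :=
            mul_le_mul h3 h1 (abs_nonneg _) (by positivity)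
          _ = 1/δ := by rw [mul_one, one_div]
      _ = (1 / δ) ^ d := by rw [Finset.prod_const, hcard]
  calc |∑ i, p.eval (v i) * (Lagrange.basis Finset.univ v i).eval t|
      ≤ ∑ i : Fin (d+1), |p.eval (v i) * (Lagrange.basis Finset.univ v i).eval t| :=
        Finset.abs_sum_le_sum_abs _ _
    _ ≤ ∑ _i : Fin (d+1), M * (1 / δ) ^ d := by
        apply Finset.sum_le_sum
        intro i _
        rw [abs_mul]
        exact mul_le_mul (hM i) (hbasis i) (abs_nonneg _) hM0
    _ = (d + 1) * M * (1 / δ) ^ d := by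
        rw [Finset.sum_const, Finset.card_univ, Fintype.card_fin]
        ring

/-- A function given by evaluation of a polynomial of `natDegree ≤ d`. -/
def IsPolyLe (d : ℕ) (F : ℝ → ℝ) : Prop :=
  ∃ p : Polynomial ℝ, p.natDegree ≤ d ∧ ∀ x, F x = p.eval x

/-- 1D Remez-type inequality. -/
lemma remez1D {d : ℕ} (F : ℝ → ℝ) (hF : IsPolyLe d F) (S : Set ℝ)
    (hSI : S ⊆ Set.Icc (0:ℝ) 1) (m M : ℝ) (hm : 0 < m)
    (hvol : ENNReal.ofReal m ≤ volume S) (hM : ∀ x ∈ S, |F x| ≤ M) :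
    ∀ t ∈ Set.Icc (0:ℝ) 1, |F t| ≤ (d + 1) * M * (4 * (d + 1) / m) ^ d := by
  obtain ⟨p, hpd, hpF⟩ := hF
  set δ := m / (4 * (d + 1)) with hδdef
  have hδ : 0 < δ := by positivity
  have hlt : ENNReal.ofReal (2 * d * δ) < volume S := by
    refine lt_of_lt_of_le (ENNReal.ofReal_lt_ofReal_iff hm |>.mpr ?_) hvol
    rw [hδdef]
    have hden : (0:ℝ) < 4 * ((d:ℝ)+1) := by positivity
    rw [show 2 * (d:ℝ) * (m / (4 * ((d:ℝ) + 1))) = m * ((2 * d) / (4 * (d+1))) by ring]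
    nlinarith [Nat.cast_nonneg (α := ℝ) d, hm, mul_pos hm hden,
      (div_lt_one hden).mpr (by nlinarith [Nat.cast_nonneg (α := ℝ) d] : 2*(d:ℝ) < 4*(d+1))]
  obtain ⟨v, hvS, hsep⟩ := exists_separated d δ hδ S hlt
  intro t ht
  have h1δ : (1:ℝ)/δ = 4 * (d+1) / m := by
    rw [hδdef]; field_simp
  have := lagrange_bound p hpd v δ hδ hsep (fun i => hSI (hvS i)) M
    (fun i => by rw [← hpF]; exact hM _ (hvS i)) t ht
  rw [hpF t]
  rw [← h1δ]
  exact this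

lemma volume_Icc01X : volume (Set.Icc (0:ℝ) 1) = 1 := by
  rw [Real.volume_Icc]; norm_num

/-- 2D Remez-type inequality on the unit square. -/
lemma remez2D {d : ℕ} (F : ℝ → ℝ → ℝ)
    (hFx : ∀ y, IsPolyLe d (fun x => F x y)) (hFy : ∀ x, IsPolyLe d (fun y => F x y))
    (G : Set (ℝ × ℝ)) (hG : MeasurableSet G)
    (hGI : G ⊆ Set.Icc (0:ℝ) 1 ×ˢ Set.Icc (0:ℝ) 1)
    (m M : ℝ) (hm : 0 < m)
    (hvol : ENNReal.ofReal m ≤ volume G) (hM : ∀ z ∈ G, |F z.1 z.2| ≤ M) :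
    ∀ x ∈ Set.Icc (0:ℝ) 1, ∀ y ∈ Set.Icc (0:ℝ) 1,
      |F x y| ≤ ((d:ℝ) + 1) ^ 2 * M * (8 * (d + 1) / m) ^ (2 * d) := by
  have hm2 : (0:ℝ) < m / 2 := by positivity
  set σ : ℝ → ℝ≥0∞ := fun x => volume (Prod.mk x ⁻¹' G) with hσdef
  have hσmeas : Measurable σ := measurable_measure_prodMk_left hG
  have hσ1 : ∀ x, σ x ≤ 1 := by
    intro x
    have : Prod.mk x ⁻¹' G ⊆ Set.Icc (0:ℝ) 1 := fun y hy => (hGI hy).2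
    calc σ x ≤ volume (Set.Icc (0:ℝ) 1) := measure_mono this
      _ = 1 := volume_Icc01X
  have hσ0 : ∀ x, x ∉ Set.Icc (0:ℝ) 1 → σ x = 0 := by
    intro x hx
    have : Prod.mk x ⁻¹' G = ∅ := by
      ext y; simp only [Set.mem_preimage, Set.mem_empty_iff_false, iff_false]
      intro hy; exact hx (hGI hy).1
    rw [hσdef]; simp [this]
  have htot : volume G = ∫⁻ x, σ x := by
    rw [Measure.volume_eq_prod, Measure.prod_apply hG]
  set X : Set ℝ := {x | ENNReal.ofReal (m/2) ≤ σ x} with hXdef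
  have hXmeas : MeasurableSet X := hσmeas measurableSet_Ici
  have hXI : X ⊆ Set.Icc (0:ℝ) 1 := by
    intro x hx
    by_contra h
    rw [hXdef] at hx
    simp only [Set.mem_setOf_eq] at hx
    rw [hσ0 x h] at hx
    have : ENNReal.ofReal (m/2) = 0 := le_antisymm hx zero_le
    rw [ENNReal.ofReal_eq_zero] at this
    linarith
  have hXvol : ENNReal.ofReal (m/2) ≤ volume X := by
    have hptwise : ∀ x, σ x ≤ X.indicator (fun _ => 1) x
        + (Set.Icc (0:ℝ) 1).indicator (fun _ => ENNReal.ofReal (m/2)) x := by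
      intro x
      by_cases hx : x ∈ X
      · calc σ x ≤ 1 := hσ1 x
          _ ≤ _ := by rw [Set.indicator_of_mem hx]; exact le_add_right le_rfl
      · by_cases hI : x ∈ Set.Icc (0:ℝ) 1
        · have : σ x ≤ ENNReal.ofReal (m/2) := by
            rw [hXdef] at hx; simp only [Set.mem_setOf_eq, not_le] at hx; exact hx.le
          calc σ x ≤ ENNReal.ofReal (m/2) := this
            _ ≤ _ := by rw [Set.indicator_of_mem hI]; exact le_add_left le_rfl
        · rw [hσ0 x hI]; exact zero_le
    have hint : (∫⁻ x, σ x) ≤ volume X + ENNReal.ofReal (m/2) := by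
      calc (∫⁻ x, σ x) ≤ ∫⁻ x, (X.indicator (fun _ => 1) x
          + (Set.Icc (0:ℝ) 1).indicator (fun _ => ENNReal.ofReal (m/2)) x) :=
            lintegral_mono hptwise
        _ = volume X + ENNReal.ofReal (m/2) * volume (Set.Icc (0:ℝ) 1) := by
            rw [lintegral_add_left (f := X.indicator fun _ => (1:ℝ≥0∞))
              (measurable_const.indicator hXmeas),
              lintegral_indicator_const hXmeas,
              lintegral_indicator_const measurableSet_Icc]
            rw [one_mul]
        _ = volume X + ENNReal.ofReal (m/2) := by rw [volume_Icc01X, mul_one]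
    have h2 : ENNReal.ofReal (m/2) + ENNReal.ofReal (m/2) ≤ volume X + ENNReal.ofReal (m/2) := by
      calc ENNReal.ofReal (m/2) + ENNReal.ofReal (m/2) = ENNReal.ofReal m := by
            rw [← ENNReal.ofReal_add (by positivity) (by positivity)]; norm_num
        _ ≤ volume G := hvol
        _ = ∫⁻ x, σ x := htot
        _ ≤ _ := hint
    exact (ENNReal.add_le_add_iff_right ENNReal.ofReal_ne_top).mp h2
  set M₁ : ℝ := ((d:ℝ) + 1) * M * (4 * (d + 1) / (m/2)) ^ d with hM₁def
  have step1 : ∀ x ∈ X, ∀ y ∈ Set.Icc (0:ℝ) 1, |F x y| ≤ M₁ := by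
    intro x hx
    refine remez1D (fun y => F x y) (hFy x) (Prod.mk x ⁻¹' G)
      (fun y hy => (hGI hy).2) (m/2) M hm2 hx (fun y hy => hM (x, y) hy)
  have step2 : ∀ y ∈ Set.Icc (0:ℝ) 1, ∀ x ∈ Set.Icc (0:ℝ) 1,
      |F x y| ≤ ((d:ℝ) + 1) * M₁ * (4 * (d + 1) / (m/2)) ^ d := by
    intro y hy
    exact remez1D (fun x => F x y) (hFx y) X hXI (m/2) M₁ hm2 hXvol
      (fun x hx => step1 x hx y hy)
  intro x hx y hy
  calc |F x y| ≤ ((d:ℝ) + 1) * M₁ * (4 * (d + 1) / (m/2)) ^ d := step2 y hy x hx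
    _ = ((d:ℝ) + 1) ^ 2 * M * (8 * (d + 1) / m) ^ (2 * d) := by
      rw [hM₁def]
      rw [show 4 * ((d:ℝ) + 1) / (m/2) = 8 * (d + 1) / m by field_simp; ring]
      rw [two_mul, pow_add]
      ring

lemma fin2_index_le_totalDegree {d : ℕ} (P : MvPolynomial (Fin 2) ℝ) (hP : P.totalDegree ≤ d)
    {m : Fin 2 →₀ ℕ} (hm : m ∈ P.support) (i : Fin 2) : m i ≤ d := by
  refine le_trans ?_ (le_trans (MvPolynomial.le_totalDegree hm) hP)
  by_cases h : m i = 0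
  · simp [h]
  · have hi : i ∈ m.support := Finsupp.mem_support_iff.mpr h
    calc m i = (fun _ e => e) i (m i) := rfl
      _ ≤ m.sum fun _ e => e := Finset.single_le_sum (fun _ _ => Nat.zero_le _) hi

lemma sliceX_spec {d : ℕ} (P : MvPolynomial (Fin 2) ℝ) (hP : P.totalDegree ≤ d) (y : ℝ) :
    ∃ p : Polynomial ℝ, p.natDegree ≤ d ∧
      ∀ x, Polynomial.eval x p = MvPolynomial.eval ![x, y] P := by
  refine ⟨∑ m ∈ P.support, Polynomial.C (MvPolynomial.coeff m P * y ^ (m 1))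
    * Polynomial.X ^ (m 0), ?_, ?_⟩
  · apply Polynomial.natDegree_sum_le_of_forall_le
    intro m hm
    calc (Polynomial.C (MvPolynomial.coeff m P * y ^ (m 1)) * Polynomial.X ^ (m 0)).natDegree
        ≤ m 0 := Polynomial.natDegree_C_mul_X_pow_le _ _
      _ ≤ d := by simpa using fin2_index_le_totalDegree P hP hm 0
  · intro x
    rw [MvPolynomial.eval_eq', Polynomial.eval_finset_sum]
    apply Finset.sum_congr rfl
    intro m _
    rw [Fin.prod_univ_two]
    simp [Matrix.cons_val_zero, Matrix.cons_val_one, Matrix.head_cons]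
    ring

lemma sliceY_spec {d : ℕ} (P : MvPolynomial (Fin 2) ℝ) (hP : P.totalDegree ≤ d) (x : ℝ) :
    ∃ p : Polynomial ℝ, p.natDegree ≤ d ∧
      ∀ y, Polynomial.eval y p = MvPolynomial.eval ![x, y] P := by
  refine ⟨∑ m ∈ P.support, Polynomial.C (MvPolynomial.coeff m P * x ^ (m 0))
    * Polynomial.X ^ (m 1), ?_, ?_⟩
  · apply Polynomial.natDegree_sum_le_of_forall_le
    intro m hm
    calc (Polynomial.C (MvPolynomial.coeff m P * x ^ (m 0)) * Polynomial.X ^ (m 1)).natDegree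
        ≤ m 1 := Polynomial.natDegree_C_mul_X_pow_le _ _
      _ ≤ d := by simpa using fin2_index_le_totalDegree P hP hm 1
  · intro y
    rw [MvPolynomial.eval_eq', Polynomial.eval_finset_sum]
    apply Finset.sum_congr rfl
    intro m _
    rw [Fin.prod_univ_two]
    simp [Matrix.cons_val_zero, Matrix.cons_val_one, Matrix.head_cons]
    ring

lemma pair_select (E : Set (ℝ × ℝ)) (hE : MeasurableSet E)
    (hEI : E ⊆ Set.Icc (0:ℝ) 1 ×ˢ Set.Icc (0:ℝ) 1) :
    ∃ x' : ℝ, (volume E) ^ 2 / 2 ≤ volume {z : ℝ × ℝ | z ∈ E ∧ (x', z.2) ∈ E} := by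
  classical
  set μ : Measure ℝ := volume with hμ
  set I : Set ℝ := Set.Icc (0:ℝ) 1 with hI
  set g : ℝ → ℝ≥0∞ := fun y => μ ((fun x => (x, y)) ⁻¹' E) with hgdef
  have hgmeas : Measurable g := measurable_measure_prodMk_right hE
  have hg0 : ∀ y, y ∉ I → g y = 0 := by
    intro y hy
    have : (fun x => (x, y)) ⁻¹' E = ∅ := by
      ext x; simp only [Set.mem_preimage, Set.mem_empty_iff_false, iff_false]
      intro hxy; exact hy (hEI hxy).2
    rw [hgdef]; simp [this]
  have htotE : volume E = ∫⁻ y, g y ∂μ := by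
    rw [Measure.volume_eq_prod, Measure.prod_apply_symm hE]
  set W : ℝ → Set (ℝ × ℝ) := fun x' => {z : ℝ × ℝ | z ∈ E ∧ (x', z.2) ∈ E} with hWdef
  have hWmeas : ∀ x', MeasurableSet (W x') := by
    intro x'
    have : W x' = E ∩ (fun z : ℝ × ℝ => (x', z.2)) ⁻¹' E := rfl
    rw [this]
    exact hE.inter (hE.preimage (measurable_const.prodMk measurable_snd))
  have hW : ∀ x', volume (W x') =
      ∫⁻ y, (E.indicator (fun _ => (1:ℝ≥0∞)) (x', y)) * g y ∂μ := by
    intro x'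
    rw [Measure.volume_eq_prod, Measure.prod_apply_symm (hWmeas x')]
    refine lintegral_congr fun y => ?_
    by_cases h : (x', y) ∈ E
    · have hsec : (fun x => (x, y)) ⁻¹' (W x') = (fun x => (x, y)) ⁻¹' E := by
        ext x; simp only [Set.mem_preimage, hWdef, Set.mem_setOf_eq]
        exact ⟨fun hz => hz.1, fun hz => ⟨hz, h⟩⟩
      rw [hsec, Set.indicator_of_mem h, one_mul]
    · have hsec : (fun x => (x, y)) ⁻¹' (W x') = ∅ := by
        ext x; simp only [Set.mem_preimage, hWdef, Set.mem_setOf_eq,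
          Set.mem_empty_iff_false, iff_false]
        exact fun hz => h hz.2
      rw [hsec, Set.indicator_of_notMem h, zero_mul]
      simp
  have hswap : ∫⁻ x', volume (W x') ∂μ = ∫⁻ y, g y * g y ∂μ := by
    have hk : Measurable (fun z : ℝ × ℝ => E.indicator (fun _ => (1:ℝ≥0∞)) z * g z.2) :=
      (measurable_const.indicator hE).mul (hgmeas.comp measurable_snd)
    calc ∫⁻ x', volume (W x') ∂μ
        = ∫⁻ x', ∫⁻ y, (E.indicator (fun _ => (1:ℝ≥0∞)) (x', y)) * g y ∂μ ∂μ := by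
          exact lintegral_congr fun x' => hW x'
      _ = ∫⁻ y, ∫⁻ x', (E.indicator (fun _ => (1:ℝ≥0∞)) (x', y)) * g y ∂μ ∂μ :=
          lintegral_lintegral_swap hk.aemeasurable
      _ = ∫⁻ y, g y * g y ∂μ := by
          refine lintegral_congr fun y => ?_
          have hmeas' : Measurable fun x' : ℝ => E.indicator (fun _ => (1:ℝ≥0∞)) (x', y) :=
            (measurable_const.indicator hE).comp measurable_prodMk_right
          rw [lintegral_mul_const _ hmeas']
          congr 1
          have : ∀ x', E.indicator (fun _ => (1:ℝ≥0∞)) (x', y)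
              = ((fun x => (x, y)) ⁻¹' E).indicator (fun _ => (1:ℝ≥0∞)) x' := by
            intro x'
            by_cases h : (x', y) ∈ E
            · simp [Set.indicator_apply, Set.mem_preimage, h]
            · simp [Set.indicator_apply, Set.mem_preimage, h]
          simp_rw [this]
          have hsecmeas : MeasurableSet ((fun x => (x, y)) ⁻¹' E) :=
            hE.preimage measurable_prodMk_right
          rw [lintegral_indicator_const hsecmeas, one_mul]
  -- Cauchy-Schwarz
  have hCS : (volume E) ^ 2 ≤ ∫⁻ y, g y * g y ∂μ := by
    set ρ : Measure ℝ := μ.restrict I with hρ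
    have hgind : ∀ y, g y = I.indicator g y := by
      intro y
      by_cases hy : y ∈ I
      · rw [Set.indicator_of_mem hy]
      · rw [Set.indicator_of_notMem hy, hg0 y hy]
    have h1 : ∫⁻ y, g y ∂μ = ∫⁻ y, g y ∂ρ := by
      rw [hρ, ← lintegral_indicator measurableSet_Icc]
      exact lintegral_congr fun y => hgind y
    have h2 : ∫⁻ y, g y * g y ∂ρ ≤ ∫⁻ y, g y * g y ∂μ :=
      lintegral_mono' Measure.restrict_le_self le_rfl
    have hρuniv : ρ Set.univ = 1 := by
      rw [hρ, Measure.restrict_apply_univ]; exact volume_Icc01X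
    have hconj : Real.HolderConjugate 2 2 := Real.HolderConjugate.two_two
    have hCS0 := ENNReal.lintegral_mul_le_Lp_mul_Lq ρ hconj hgmeas.aemeasurable
      (aemeasurable_const (b := (1:ℝ≥0∞)))
    simp only [Pi.mul_apply, mul_one, ENNReal.one_rpow, lintegral_const, hρuniv,
      one_mul] at hCS0
    -- hCS0 : ∫⁻ g ∂ρ ≤ (∫⁻ g^(2:ℝ) ∂ρ)^(1/2) * 1^(1/2)
    have hCS1 : ∫⁻ y, g y ∂ρ ≤ (∫⁻ y, g y ^ (2:ℝ) ∂ρ) ^ ((1:ℝ)/2) := hCS0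
    have hsq : ∀ a : ℝ≥0∞, a ^ (2:ℝ) = a * a := by
      intro a
      rw [show (2:ℝ) = ((2:ℕ):ℝ) by norm_num, ENNReal.rpow_natCast, sq]
    calc (volume E) ^ 2 = (∫⁻ y, g y ∂ρ) ^ 2 := by rw [htotE, h1]
      _ ≤ ((∫⁻ y, g y ^ (2:ℝ) ∂ρ) ^ ((1:ℝ)/2)) ^ 2 := by
          rw [sq, sq]; exact mul_le_mul' hCS1 hCS1
      _ = ∫⁻ y, g y ^ (2:ℝ) ∂ρ := by
          rw [← ENNReal.rpow_natCast ((∫⁻ y, g y ^ (2:ℝ) ∂ρ) ^ ((1:ℝ)/2)) 2,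
            ← ENNReal.rpow_mul]
          norm_num
      _ = ∫⁻ y, g y * g y ∂ρ := lintegral_congr fun y => hsq (g y)
      _ ≤ ∫⁻ y, g y * g y ∂μ := h2
  -- existence of a good x'
  by_cases hE0 : volume E = 0
  · exact ⟨0, by simp [hE0]⟩
  have hEle1 : volume E ≤ 1 := by
    calc volume E ≤ volume (Set.Icc (0:ℝ) 1 ×ˢ Set.Icc (0:ℝ) 1) := measure_mono hEI
      _ = 1 := by
          rw [Measure.volume_eq_prod, Measure.prod_prod, volume_Icc01X, one_mul]
  by_contra hcon
  push_neg at hcon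
  have hbound : ∀ x', volume (W x') ≤ I.indicator (fun _ => (volume E)^2/2) x' := by
    intro x'
    by_cases hx' : x' ∈ I
    · rw [Set.indicator_of_mem hx']; exact (hcon x').le
    · have : W x' = ∅ := by
        ext z; simp only [hWdef, Set.mem_setOf_eq, Set.mem_empty_iff_false, iff_false]
        intro hz; exact hx' (hEI hz.2).1
      rw [this, Set.indicator_of_notMem hx']
      simp
  have hint : ∫⁻ x', volume (W x') ∂μ ≤ (volume E)^2/2 := by
    calc ∫⁻ x', volume (W x') ∂μ ≤ ∫⁻ x', I.indicator (fun _ => (volume E)^2/2) x' ∂μ :=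
        lintegral_mono hbound
      _ = (volume E)^2/2 * μ I := lintegral_indicator_const measurableSet_Icc _
      _ = (volume E)^2/2 := by rw [hI]; rw [show μ (Set.Icc (0:ℝ) 1) = 1 from volume_Icc01X, mul_one]
  have hfin : (volume E)^2 ≠ ⊤ := by
    intro h
    have := le_trans (le_trans hCS (le_of_eq hswap.symm)) hint
    exact absurd (pow_le_pow_left' hEle1 2) (by rw [h]; simp)
  have hne0 : (volume E)^2 ≠ 0 := pow_ne_zero 2 hE0
  have : (volume E)^2 ≤ (volume E)^2/2 := le_trans hCS (le_trans (le_of_eq hswap.symm) hint)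
  exact absurd this (not_le.mpr (ENNReal.half_lt_self hne0 hfin))

lemma abs_le_euclNorm {D : ℕ} (v : Fin D → ℝ) (i : Fin D) : |v i| ≤ euclNorm v := by
  rw [euclNorm, ← Real.sqrt_sq_eq_abs]
  apply Real.sqrt_le_sqrt
  exact Finset.single_le_sum (fun j _ => sq_nonneg (v j)) (Finset.mem_univ i)

lemma euclNorm_nonneg {D : ℕ} (v : Fin D → ℝ) : 0 ≤ euclNorm v := Real.sqrt_nonneg _

lemma euclNorm_le {D : ℕ} (v : Fin D → ℝ) (B : ℝ) (hB : 0 ≤ B) (h : ∀ i, |v i| ≤ B) :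
    euclNorm v ≤ Real.sqrt D * B := by
  rw [euclNorm]
  calc Real.sqrt (∑ i, v i ^ 2) ≤ Real.sqrt (∑ _i : Fin D, B ^ 2) := by
        apply Real.sqrt_le_sqrt
        apply Finset.sum_le_sum
        intro i _
        calc v i ^ 2 = |v i| ^ 2 := (sq_abs _).symm
          _ ≤ B ^ 2 := by
            apply pow_le_pow_left₀ (abs_nonneg _) (h i)
    _ = Real.sqrt (D * B ^ 2) := by rw [Finset.sum_const, Finset.card_univ, Fintype.card_fin,
          nsmul_eq_mul]
    _ = Real.sqrt D * B := by
        rw [Real.sqrt_mul (Nat.cast_nonneg D), Real.sqrt_sq hB]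

lemma vol_swap_preimage (S : Set (ℝ × ℝ)) (hS : MeasurableSet S) :
    volume (Prod.swap ⁻¹' S) = volume S := by
  rw [Measure.volume_eq_prod]
  exact Measure.measurePreserving_swap.measure_preimage hS.nullMeasurableSet

lemma natDegree_sub_sub_le {d : ℕ} (a b c : Polynomial ℝ) (ha : a.natDegree ≤ d)
    (hb : b.natDegree ≤ d) (hc : c.natDegree ≤ d) : (a - b - c).natDegree ≤ d :=
  le_trans (Polynomial.natDegree_sub_le _ _)
    (max_le (le_trans (Polynomial.natDegree_sub_le _ _) (max_le ha hb)) hc)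

/-- sublevel-set estimate used in the proof of Lemma "cousin": if
`|f(x) + g(y) + P(x,y)| ≤ 1` on `E ⊆ [0,1]²`, and
`A := inf_{p,q} sup_{(x,y)∈[0,1]²} |P(x,y) − p(x) − q(y)|` over `ℝ^D`-valued one-variable
polynomials `p, q` of degree `≤ d`, then `|E| ≤ C·A^{-γ}` with `γ` depending only on `d`.
(The conclusion is stated in the equivalent product form `|E|·A^γ ≤ C`, which avoids the
rpow convention `0^{-γ} = 0`.) -/
theorem stmt_17 (d : ℕ) (hd : 1 ≤ d) :
    ∃ γ : ℝ, 0 < γ ∧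
      ∀ D : ℕ, 1 ≤ D →
        ∃ C : ℝ,
          ∀ P : Fin D → MvPolynomial (Fin 2) ℝ, (∀ i, (P i).totalDegree ≤ d) →
            ∀ f g : ℝ → (Fin D → ℝ), Measurable f → Measurable g →
              ∀ E : Set (ℝ × ℝ), MeasurableSet E →
                E ⊆ Set.Icc (0 : ℝ) 1 ×ˢ Set.Icc (0 : ℝ) 1 →
                (∀ p ∈ E, euclNorm (fun i =>
                    f p.1 i + g p.2 i + MvPolynomial.eval ![p.1, p.2] (P i)) ≤ 1) →
                (volume E).toReal *
                    (sInf { r : ℝ | ∃ p q : Fin D → Polynomial ℝ,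
                      (∀ i, (p i).natDegree ≤ d) ∧ (∀ i, (q i).natDegree ≤ d) ∧
                      r = sSup { s : ℝ | ∃ x ∈ Set.Icc (0 : ℝ) 1, ∃ y ∈ Set.Icc (0 : ℝ) 1,
                        s = euclNorm (fun i => MvPolynomial.eval ![x, y] (P i)
                          - (p i).eval x - (q i).eval y) } }) ^ γ
                  ≤ C := by
  have hd8 : ((8 * d : ℕ) : ℝ) ≠ 0 := by positivity
  refine ⟨1 / (8 * d), by positivity, ?_⟩
  intro D hD
  set C₁ : ℝ := Real.sqrt D * (4 * ((d:ℝ) + 1) ^ 2 * (64 * ((d:ℝ) + 1)) ^ (2 * d)) with hC₁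
  have hC₁1 : 1 ≤ C₁ := by
    have h1 : (1:ℝ) ≤ Real.sqrt D := by
      rw [show (1:ℝ) = Real.sqrt 1 by simp]
      exact Real.sqrt_le_sqrt (by exact_mod_cast hD)
    have h2 : (1:ℝ) ≤ 4 * ((d:ℝ) + 1) ^ 2 := by nlinarith [Nat.cast_nonneg (α := ℝ) d]
    have h3 : (1:ℝ) ≤ (64 * ((d:ℝ) + 1)) ^ (2 * d) :=
      one_le_pow₀ (by nlinarith [Nat.cast_nonneg (α := ℝ) d])
    calc (1:ℝ) = 1 * (1 * 1) := by ring
      _ ≤ Real.sqrt D * (4 * ((d:ℝ) + 1) ^ 2 * (64 * ((d:ℝ) + 1)) ^ (2 * d)) := by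
          apply mul_le_mul h1 (mul_le_mul h2 h3 zero_le_one (by linarith)) (by norm_num)
            (Real.sqrt_nonneg _)
  refine ⟨C₁, ?_⟩
  intro P hP f g hf hg E hE hEI hbound
  set I : Set ℝ := Set.Icc (0:ℝ) 1 with hIdef
  set Aset : Set ℝ := { r : ℝ | ∃ p q : Fin D → Polynomial ℝ,
      (∀ i, (p i).natDegree ≤ d) ∧ (∀ i, (q i).natDegree ≤ d) ∧
      r = sSup { s : ℝ | ∃ x ∈ Set.Icc (0 : ℝ) 1, ∃ y ∈ Set.Icc (0 : ℝ) 1,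
        s = euclNorm (fun i => MvPolynomial.eval ![x, y] (P i)
          - (p i).eval x - (q i).eval y) } } with hAset
  have hAset_nonneg : ∀ r ∈ Aset, 0 ≤ r := by
    rintro r ⟨p, q, _, _, rfl⟩
    apply Real.sSup_nonneg
    rintro s ⟨x, _, y, _, rfl⟩
    exact euclNorm_nonneg _
  have hA_nonneg : 0 ≤ sInf Aset := Real.sInf_nonneg hAset_nonneg
  -- trivial case
  by_cases hE0 : (volume E).toReal = 0
  · rw [hE0, zero_mul]; linarith
  set e : ℝ := (volume E).toReal with hedef
  have hEfin : volume E ≠ ⊤ := by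
    intro h
    have : volume E ≤ 1 := by
      calc volume E ≤ volume (I ×ˢ I) := measure_mono hEI
        _ = 1 := by rw [hIdef, Measure.volume_eq_prod, Measure.prod_prod, volume_Icc01X,
            one_mul]
    rw [h] at this
    exact absurd this (by simp)
  have he_pos : 0 < e := lt_of_le_of_ne ENNReal.toReal_nonneg (Ne.symm hE0)
  have hb : volume E = ENNReal.ofReal e := (ENNReal.ofReal_toReal hEfin).symm
  -- select x'
  obtain ⟨x', hx'⟩ := pair_select E hE hEI
  set W : Set (ℝ × ℝ) := {z : ℝ × ℝ | z ∈ E ∧ (x', z.2) ∈ E} with hWdef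
  have hWmeas : MeasurableSet W :=
    hE.inter (hE.preimage (measurable_const.prodMk measurable_snd))
  have hWsub : W ⊆ I ×ˢ I := fun z hz => hEI hz.1
  set Wsw : Set (ℝ × ℝ) := Prod.swap ⁻¹' W with hWswdef
  have hWswmeas : MeasurableSet Wsw := hWmeas.preimage measurable_swap
  have hWswsub : Wsw ⊆ I ×ˢ I := by
    intro z hz
    have h2 := hWsub hz
    exact ⟨h2.2, h2.1⟩
  obtain ⟨y', hy'⟩ := pair_select Wsw hWswmeas hWswsub
  set G'' : Set (ℝ × ℝ) := {z : ℝ × ℝ | z ∈ Wsw ∧ (y', z.2) ∈ Wsw} with hG''def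
  have hG''meas : MeasurableSet G'' :=
    hWswmeas.inter (hWswmeas.preimage (measurable_const.prodMk measurable_snd))
  set G : Set (ℝ × ℝ) := Prod.swap ⁻¹' G'' with hGdef
  have hGmeas : MeasurableSet G := hG''meas.preimage measurable_swap
  have hGmem : ∀ z : ℝ × ℝ, z ∈ G ↔
      ((z ∈ E ∧ (x', z.2) ∈ E) ∧ ((z.1, y') ∈ E ∧ (x', y') ∈ E)) := by
    intro z
    constructor
    · rintro ⟨⟨hz1, hz2⟩, hz3, hz4⟩
      exact ⟨⟨hz1, hz2⟩, hz3, hz4⟩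
    · rintro ⟨⟨hz1, hz2⟩, hz3, hz4⟩
      exact ⟨⟨hz1, hz2⟩, hz3, hz4⟩
  have hGsub : G ⊆ I ×ˢ I := fun z hz => hEI ((hGmem z).mp hz).1.1
  -- volume of G
  have hvolG : (volume E) ^ 4 / 8 ≤ volume G := by
    have h1 : volume Wsw = volume W := vol_swap_preimage W hWmeas
    have h2 : volume G = volume G'' := vol_swap_preimage G'' hG''meas
    have h3 : (volume W) ^ 2 / 2 ≤ volume G'' := by rw [← h1]; exact hy'
    have h4 : ((volume E) ^ 2 / 2) ^ 2 / 2 ≤ volume G'' := by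
      refine le_trans ?_ h3
      gcongr
    rw [h2]
    refine le_trans (le_of_eq ?_) h4
    rw [div_eq_mul_inv, div_eq_mul_inv, div_eq_mul_inv, mul_pow, ← pow_mul, mul_assoc,
      ← pow_succ]
    congr 1
    rw [← ENNReal.inv_pow]
    norm_num
  set m : ℝ := e ^ 4 / 8 with hmdef
  have hm : 0 < m := by positivity
  have hvolG' : ENNReal.ofReal m ≤ volume G := by
    refine le_trans (le_of_eq ?_) hvolG
    rw [hmdef, ENNReal.ofReal_div_of_pos (by norm_num), ENNReal.ofReal_pow he_pos.le, ← hb]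
    norm_num
  -- polynomials
  set pp : Fin D → Polynomial ℝ := fun i => (sliceX_spec (P i) (hP i) y').choose with hppdef
  have hpp : ∀ i, (pp i).natDegree ≤ d ∧
      ∀ x, Polynomial.eval x (pp i) = MvPolynomial.eval ![x, y'] (P i) :=
    fun i => (sliceX_spec (P i) (hP i) y').choose_spec
  set q : Fin D → Polynomial ℝ := fun i => (sliceY_spec (P i) (hP i) x').choose with hqdef
  have hq : ∀ i, (q i).natDegree ≤ d ∧
      ∀ y, Polynomial.eval y (q i) = MvPolynomial.eval ![x', y] (P i) :=
    fun i => (sliceY_spec (P i) (hP i) x').choose_spec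
  set p : Fin D → Polynomial ℝ := fun i =>
    pp i - Polynomial.C (MvPolynomial.eval ![x', y'] (P i)) with hpdef
  have hpdeg : ∀ i, (p i).natDegree ≤ d := by
    intro i
    refine le_trans (Polynomial.natDegree_sub_le _ _) (max_le (hpp i).1 ?_)
    simp [Polynomial.natDegree_C]
  have hqdeg : ∀ i, (q i).natDegree ≤ d := fun i => (hq i).1
  set F : Fin D → ℝ → ℝ → ℝ := fun i x y =>
    MvPolynomial.eval ![x, y] (P i) - (p i).eval x - (q i).eval y with hFdef
  have hpeval : ∀ i x, (p i).eval x
      = MvPolynomial.eval ![x, y'] (P i) - MvPolynomial.eval ![x', y'] (P i) := by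
    intro i x
    rw [hpdef]
    simp only [Polynomial.eval_sub, Polynomial.eval_C]
    rw [(hpp i).2 x]
  -- corner bound
  have hcorner : ∀ i, ∀ z ∈ G, |F i z.1 z.2| ≤ 4 := by
    intro i z hz
    obtain ⟨⟨hz1, hz2⟩, hz3, hz4⟩ := (hGmem z).mp hz
    obtain ⟨x, y⟩ := z
    simp only at hz1 hz2 hz3 hz4 ⊢
    have key : ∀ w : ℝ × ℝ, w ∈ E →
        |f w.1 i + g w.2 i + MvPolynomial.eval ![w.1, w.2] (P i)| ≤ 1 :=
      fun w hw => le_trans (abs_le_euclNorm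
        (fun j => f w.1 j + g w.2 j + MvPolynomial.eval ![w.1, w.2] (P j)) i) (hbound w hw)
    have k1 : |f x i + g y i + MvPolynomial.eval ![x, y] (P i)| ≤ 1 := key (x, y) hz1
    have k2 : |f x' i + g y i + MvPolynomial.eval ![x', y] (P i)| ≤ 1 := key (x', y) hz2
    have k3 : |f x i + g y' i + MvPolynomial.eval ![x, y'] (P i)| ≤ 1 := key (x, y') hz3
    have k4 : |f x' i + g y' i + MvPolynomial.eval ![x', y'] (P i)| ≤ 1 := key (x', y') hz4
    have hFeq : F i x y =
        (f x i + g y i + MvPolynomial.eval ![x, y] (P i))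
        - (f x' i + g y i + MvPolynomial.eval ![x', y] (P i))
        - (f x i + g y' i + MvPolynomial.eval ![x, y'] (P i))
        + (f x' i + g y' i + MvPolynomial.eval ![x', y'] (P i)) := by
      rw [hFdef]
      simp only
      rw [hpeval i x, (hq i).2 y]
      ring
    rw [hFeq, abs_le]
    obtain ⟨a1, b1⟩ := abs_le.mp k1
    obtain ⟨a2, b2⟩ := abs_le.mp k2
    obtain ⟨a3, b3⟩ := abs_le.mp k3
    obtain ⟨a4, b4⟩ := abs_le.mp k4
    constructor <;> nlinarith
  -- slice polynomiality of F i
  have hFx : ∀ i y, IsPolyLe d (fun x => F i x y) := by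
    intro i y
    obtain ⟨a, ha, haev⟩ := sliceX_spec (P i) (hP i) y
    refine ⟨a - p i - Polynomial.C ((q i).eval y),
      natDegree_sub_sub_le _ _ _ ha (hpdeg i) (by simp), ?_⟩
    intro x
    simp only [hFdef, Polynomial.eval_sub, Polynomial.eval_C, haev x]
  have hFy : ∀ i x, IsPolyLe d (fun y => F i x y) := by
    intro i x
    obtain ⟨a, ha, haev⟩ := sliceY_spec (P i) (hP i) x
    refine ⟨a - Polynomial.C ((p i).eval x) - q i,
      natDegree_sub_sub_le _ _ _ ha (by simp) (hqdeg i), ?_⟩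
    intro y
    simp only [hFdef, Polynomial.eval_sub, Polynomial.eval_C, haev y]
    try ring
  set B₀ : ℝ := ((d:ℝ) + 1) ^ 2 * 4 * (8 * ((d:ℝ) + 1) / m) ^ (2 * d) with hB₀def
  have hB₀ : 0 ≤ B₀ := by positivity
  have hFbound : ∀ i, ∀ x ∈ I, ∀ y ∈ I, |F i x y| ≤ B₀ := by
    intro i
    exact remez2D (F i) (hFx i) (hFy i) G hGmeas hGsub m 4 hm hvolG' (hcorner i)
  -- bound on A
  set A : ℝ := sInf Aset with hAdef
  have hAle : A ≤ Real.sqrt D * B₀ := by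
    have hmem : sSup { s : ℝ | ∃ x ∈ Set.Icc (0 : ℝ) 1, ∃ y ∈ Set.Icc (0 : ℝ) 1,
        s = euclNorm (fun i => MvPolynomial.eval ![x, y] (P i)
          - (p i).eval x - (q i).eval y) } ∈ Aset := ⟨p, q, hpdeg, hqdeg, rfl⟩
    refine le_trans (csInf_le ⟨0, fun r hr => hAset_nonneg r hr⟩ hmem) ?_
    apply Real.sSup_le
    · rintro s ⟨x, hx, y, hy, rfl⟩
      apply euclNorm_le _ _ hB₀
      intro i
      exact hFbound i x hx y hy
    · positivity
  -- final numerology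
  have hkey : A ≤ C₁ * (1 / e) ^ (8 * d) := by
    refine le_trans hAle (le_of_eq ?_)
    rw [hC₁, hB₀def, hmdef]
    rw [show 8 * ((d:ℝ) + 1) / (e ^ 4 / 8) = 64 * ((d:ℝ) + 1) * (1 / e) ^ 4 by
      field_simp; ring]
    rw [mul_pow, ← pow_mul]
    ring_nf
  have hrpow : e * A ^ ((1:ℝ) / (8 * d)) ≤ C₁ := by
    set γ : ℝ := 1 / (8 * d) with hγdef
    have hγpos : 0 < γ := by positivity
    have hγle1 : γ ≤ 1 := by
      rw [hγdef]
      rw [div_le_one (by positivity)]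
      have : (1:ℝ) ≤ d := by exact_mod_cast hd
      linarith
    have h1 : A ^ γ ≤ (C₁ * (1 / e) ^ (8 * d)) ^ γ :=
      Real.rpow_le_rpow hA_nonneg hkey hγpos.le
    have h2 : (C₁ * (1 / e) ^ (8 * d)) ^ γ = C₁ ^ γ * (1 / e) := by
      rw [Real.mul_rpow (by linarith) (by positivity)]
      congr 1
      rw [← Real.rpow_natCast (1 / e) (8 * d), ← Real.rpow_mul (by positivity)]
      rw [hγdef]
      have hone : ((8 * d : ℕ) : ℝ) * (1 / (8 * (d:ℝ))) = 1 := by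
        have : (0:ℝ) < 8 * d := by
          have : (1:ℝ) ≤ d := by exact_mod_cast hd
          linarith
        push_cast
        field_simp
      rw [hone, Real.rpow_one]
    have h3 : C₁ ^ γ ≤ C₁ := by
      calc C₁ ^ γ ≤ C₁ ^ (1:ℝ) :=
        Real.rpow_le_rpow_of_exponent_le hC₁1 hγle1
        _ = C₁ := Real.rpow_one _
    calc e * A ^ γ ≤ e * ((C₁ * (1 / e) ^ (8 * d)) ^ γ) := by
          apply mul_le_mul_of_nonneg_left h1 he_pos.le
      _ = e * (C₁ ^ γ * (1 / e)) := by rw [h2]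
      _ = C₁ ^ γ := by field_simp
      _ ≤ C₁ := h3
  exact hrpow
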